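/- Let G ⊆ ℝⁿ be open and bounded, T > 0, D = (0,T) × G, and let L be the uniformly parabolic operator (Lx)(t,z) = ∂ₜx(t,z) − Σᵢⱼ aᵢⱼ(z) ∂²x/∂zᵢ∂zⱼ(t,z) − f(z, x(t,z), ∇x(t,z)) with aᵢⱼ continuous and Σ aᵢⱼ(z)ξᵢξⱼ ≥ K|ξ|² for some K > 0. Assume for every bounded W ⊂ ℝ there is k > 0 such that w₁ > w₂ in W implies f(z,w₁,ξ) − f(z,w₂,ξ) < k(w₁ − w₂) for all z ∈ G, ξ ∈ ℝⁿ. If x, y ∈ C⁰(cl D) ∩ C^{1,2}(D) satisfy Ly ≥ 0 ≥ Lx on D, y(0,·) ≥ x(0,·) on G, and y ≥ x on [0,T] × ∂G, then y(t,z) ≥ x(t,z) for all (t,z) ∈ cl D. -/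

import Mathlib

open Set Filter Topology Matrix

variable {n : ℕ}

/-- The gradient of `g : ℝⁿ → ℝ`. -/
noncomputable def grad (g : (Fin n → ℝ) → ℝ) (z : Fin n → ℝ) : Fin n → ℝ :=
  fun i => fderiv ℝ g z (Pi.single i 1)

/-- Second partial derivative `∂²g/∂zᵢ∂zⱼ`. -/
noncomputable def pd2 (g : (Fin n → ℝ) → ℝ) (z : Fin n → ℝ) (i j : Fin n) : ℝ :=
  fderiv ℝ (fun w => fderiv ℝ g w (Pi.single j 1)) z (Pi.single i 1)

/-- The uniformly parabolic operator
`(Lx)(t,z) = ∂ₜx − Σᵢⱼ aᵢⱼ(z) ∂²x/∂zᵢ∂zⱼ − f(z, x, ∇x)`. -/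
noncomputable def Lop (a : Fin n → Fin n → (Fin n → ℝ) → ℝ)
    (f : (Fin n → ℝ) → ℝ → (Fin n → ℝ) → ℝ)
    (x : ℝ → (Fin n → ℝ) → ℝ) (t : ℝ) (z : Fin n → ℝ) : ℝ :=
  deriv (fun s => x s z) t
    - ∑ i : Fin n, ∑ j : Fin n, a i j z * pd2 (x t) z i j
    - f z (x t z) (grad (x t) z)

section AuxLemmas

lemma aux_deriv_nonneg {g : ℝ → ℝ} {t₀ d : ℝ} (ht : 0 < t₀)
    (hmax : ∀ s ∈ Icc 0 t₀, g s ≤ g t₀) (hd : HasDerivAt g d t₀) : 0 ≤ d := by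
  have h1 : HasDerivWithinAt g d (Iio t₀) t₀ := hd.hasDerivWithinAt
  have h2 := (hasDerivWithinAt_iff_tendsto_slope' (s := Iio t₀) (f := g) (x := t₀)
    (notMem_Iio.mpr le_rfl)).mp h1
  refine ge_of_tendsto h2 ?_
  filter_upwards [self_mem_nhdsWithin,
    eventually_nhdsWithin_of_eventually_nhds (eventually_gt_nhds ht)] with s hs hs'
  have hnum : g s - g t₀ ≤ 0 := sub_nonpos.mpr (hmax s ⟨hs'.le, (mem_Iio.mp hs).le⟩)
  have hden : s - t₀ < 0 := sub_neg.mpr hs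
  rw [slope_def_field, div_nonneg_iff]
  exact Or.inr ⟨hnum, hden.le⟩

lemma aux_fderiv2_diff {g : (Fin n → ℝ) → ℝ} {z : Fin n → ℝ} (hg : ContDiffAt ℝ 2 g z) :
    DifferentiableAt ℝ (fderiv ℝ g) z := by
  have h : ContDiffAt ℝ 1 (fderiv ℝ g) z := hg.fderiv_right (by norm_num)
  exact h.differentiableAt one_ne_zero

lemma pd2_eq {g : (Fin n → ℝ) → ℝ} {z : Fin n → ℝ} (hg : ContDiffAt ℝ 2 g z) (i j : Fin n) :
    pd2 g z i j = fderiv ℝ (fderiv ℝ g) z (Pi.single i 1) (Pi.single j 1) := by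
  have hdiff := aux_fderiv2_diff hg
  have : fderiv ℝ (fun w => fderiv ℝ g w (Pi.single j 1)) z
      = (fderiv ℝ (fderiv ℝ g) z).flip (Pi.single j 1) := by
    have := fderiv_clm_apply (c := fderiv ℝ g) (u := fun _ => Pi.single j (1:ℝ)) hdiff
      (differentiableAt_const _)
    simpa using this
  rw [pd2, this]
  rfl

lemma pd2_symm {g : (Fin n → ℝ) → ℝ} {z : Fin n → ℝ} (hg : ContDiffAt ℝ 2 g z) (i j : Fin n) :
    pd2 g z i j = pd2 g z j i := by
  rw [pd2_eq hg, pd2_eq hg]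
  exact (hg.isSymmSndFDerivAt (by norm_num)).eq _ _

lemma aux_fderiv2_sub {g h : (Fin n → ℝ) → ℝ} {z : Fin n → ℝ}
    (hg : ContDiffAt ℝ 2 g z) (hh : ContDiffAt ℝ 2 h z) :
    fderiv ℝ (fderiv ℝ (fun w => g w - h w)) z
      = fderiv ℝ (fderiv ℝ g) z - fderiv ℝ (fderiv ℝ h) z := by
  have hgev : ∀ᶠ w in 𝓝 z, DifferentiableAt ℝ g w := by
    filter_upwards [hg.eventually (by norm_num)] with w hw
    exact hw.differentiableAt (by norm_num)
  have hhev : ∀ᶠ w in 𝓝 z, DifferentiableAt ℝ h w := by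
    filter_upwards [hh.eventually (by norm_num)] with w hw
    exact hw.differentiableAt (by norm_num)
  have heq : fderiv ℝ (fun w => g w - h w) =ᶠ[𝓝 z]
      fun w => fderiv ℝ g w - fderiv ℝ h w := by
    filter_upwards [hgev, hhev] with w hw hw'
    exact fderiv_sub hw hw'
  rw [heq.fderiv_eq]
  exact fderiv_sub (aux_fderiv2_diff hg) (aux_fderiv2_diff hh)

lemma pd2_sub {g h : (Fin n → ℝ) → ℝ} {z : Fin n → ℝ}
    (hg : ContDiffAt ℝ 2 g z) (hh : ContDiffAt ℝ 2 h z) (i j : Fin n) :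
    pd2 (fun w => g w - h w) z i j = pd2 g z i j - pd2 h z i j := by
  rw [pd2_eq (hg.sub hh), pd2_eq hg, pd2_eq hh, aux_fderiv2_sub hg hh]
  simp

lemma aux_bilin_expand (B : (Fin n → ℝ) →L[ℝ] (Fin n → ℝ) →L[ℝ] ℝ) (v : Fin n → ℝ) :
    B v v = ∑ i, ∑ j, v i * v j * B (Pi.single i 1) (Pi.single j 1) := by
  have hv : v = ∑ i, v i • (Pi.single i 1 : Fin n → ℝ) := by
    ext j
    simp [Pi.single_apply]
  conv_lhs => rw [hv]
  simp only [map_sum, _root_.map_smul, ContinuousLinearMap.coe_sum', Finset.sum_apply,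
    ContinuousLinearMap.coe_smul', Pi.smul_apply, smul_eq_mul, Finset.mul_sum]
  rw [Finset.sum_comm]
  exact Finset.sum_congr rfl fun i _ => Finset.sum_congr rfl fun j _ => by ring

lemma aux_snd_nonpos {φ : (Fin n → ℝ) → ℝ} {z : Fin n → ℝ}
    (hφ : ContDiffAt ℝ 2 φ z) (hmax : IsLocalMax φ z) (v : Fin n → ℝ) :
    fderiv ℝ (fderiv ℝ φ) z v v ≤ 0 := by
  by_contra hpos
  push_neg at hpos
  set d : ℝ := fderiv ℝ (fderiv ℝ φ) z v v with hd
  set ℓ : ℝ → (Fin n → ℝ) := fun s => z + s • v with hℓ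
  have hℓ0 : ℓ 0 = z := by simp [hℓ]
  have hℓd : ∀ s : ℝ, HasDerivAt ℓ v s := fun s => by
    simpa [hℓ] using ((hasDerivAt_id s).smul_const v).const_add z
  have hℓc : Continuous ℓ := by fun_prop
  set g' : ℝ → ℝ := fun s => fderiv ℝ φ (ℓ s) v with hg'
  have hfdiff : DifferentiableAt ℝ (fderiv ℝ φ) z := by
    have h : ContDiffAt ℝ 1 (fderiv ℝ φ) z := hφ.fderiv_right (by norm_num)
    exact h.differentiableAt one_ne_zero
  have hg'd : HasDerivAt g' d 0 := by
    have hf2 : HasFDerivAt (fderiv ℝ φ) (fderiv ℝ (fderiv ℝ φ) z) (ℓ 0) := by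
      rw [hℓ0]; exact hfdiff.hasFDerivAt
    have h1 : HasDerivAt (fun s => fderiv ℝ φ (ℓ s)) (fderiv ℝ (fderiv ℝ φ) z v) 0 :=
      hf2.comp_hasDerivAt 0 (hℓd 0)
    have := ((ContinuousLinearMap.apply ℝ ℝ v).hasFDerivAt).comp_hasDerivAt 0 h1
    exact this
  have hg'0 : g' 0 = 0 := by
    simp [hg', hℓ0, hmax.fderiv_eq_zero]
  have hev2 : ∀ᶠ s in 𝓝[>] (0:ℝ), 0 < g' s := by
    have hslope := hasDerivAt_iff_tendsto_slope.mp hg'd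
    have hslope' : Tendsto (slope g' 0) (𝓝[>] (0:ℝ)) (𝓝 d) :=
      hslope.mono_left (nhdsWithin_mono 0 (fun s hs => Set.mem_compl_singleton_iff.mpr (ne_of_gt hs)))
    have hev : ∀ᶠ s in 𝓝[>] (0:ℝ), 0 < slope g' 0 s :=
      hslope'.eventually (eventually_gt_nhds hpos)
    filter_upwards [hev, self_mem_nhdsWithin] with s hs hs'
    have : slope g' 0 s = (g' s - g' 0) / (s - 0) := slope_def_field g' 0 s
    rw [this, hg'0, sub_zero, sub_zero] at hs
    have := mul_pos hs (mem_Ioi.mp hs')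
    rwa [div_mul_cancel₀] at this
    exact ne_of_gt (mem_Ioi.mp hs')
  have hφev : ∀ᶠ w in 𝓝 z, DifferentiableAt ℝ φ w := by
    filter_upwards [hφ.eventually (by norm_num)] with w hw
    exact hw.differentiableAt (by norm_num)
  set g : ℝ → ℝ := fun s => φ (ℓ s) with hg
  have hev1 : ∀ᶠ s in 𝓝 (0:ℝ), HasDerivAt g (g' s) s := by
    have : Tendsto ℓ (𝓝 0) (𝓝 z) := by
      rw [← hℓ0]; exact hℓc.continuousAt
    filter_upwards [this.eventually hφev] with s hs
    exact (hs.hasFDerivAt.comp_hasDerivAt s (hℓd s))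
  have hev3 : ∀ᶠ s in 𝓝 (0:ℝ), g s ≤ g 0 := by
    have : Tendsto ℓ (𝓝 0) (𝓝 z) := by rw [← hℓ0]; exact hℓc.continuousAt
    filter_upwards [this.eventually hmax] with s hs
    simpa [hg, hℓ0] using hs
  obtain ⟨ε₁, hε₁, h₁⟩ := Metric.eventually_nhds_iff.mp (hev1.and hev3)
  obtain ⟨ε₂, hε₂, h₂'⟩ := Metric.eventually_nhds_iff.mp (eventually_nhdsWithin_iff.mp hev2)
  have h₂ : ∀ {s : ℝ}, dist s 0 < ε₂ → 0 < s → 0 < g' s := fun hs hs' => h₂' hs hs'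
  set ε : ℝ := min ε₁ ε₂ / 2 with hε
  have hεpos : 0 < ε := by positivity
  have hεlt₁ : ∀ s ∈ Icc (0:ℝ) ε, dist s 0 < ε₁ := by
    intro s hs
    rw [Real.dist_eq, sub_zero, abs_of_nonneg hs.1]
    calc s ≤ ε := hs.2
    _ < ε₁ := by rw [hε]; rcases le_total ε₁ ε₂ with h | h <;> simp [min_eq_left, min_eq_right, h] <;> linarith
  have hmono : StrictMonoOn g (Icc 0 ε) := by
    refine strictMonoOn_of_deriv_pos (convex_Icc 0 ε) ?_ ?_
    · intro s hs
      exact ((h₁ (hεlt₁ s hs)).1.differentiableAt.continuousAt).continuousWithinAt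
    · intro s hs
      rw [interior_Icc] at hs
      rw [(h₁ (hεlt₁ s ⟨hs.1.le, hs.2.le⟩)).1.deriv]
      refine h₂ ?_ hs.1
      rw [Real.dist_eq, sub_zero, abs_of_nonneg hs.1.le]
      calc s < ε := hs.2
      _ < ε₂ := by rw [hε]; rcases le_total ε₁ ε₂ with h | h <;> simp [min_eq_left, min_eq_right, h] <;> linarith
  have hlt : g 0 < g ε := hmono (left_mem_Icc.mpr hεpos.le) (right_mem_Icc.mpr hεpos.le) hεpos
  have hle : g ε ≤ g 0 := (h₁ (hεlt₁ ε (right_mem_Icc.mpr hεpos.le))).2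
  linarith

open scoped MatrixOrder in
lemma aux_trace_nonpos {A H : Matrix (Fin n) (Fin n) ℝ}
    (hA : ∀ ξ : Fin n → ℝ, 0 ≤ ∑ i, ∑ j, A i j * ξ i * ξ j)
    (hHsymm : ∀ i j, H i j = H j i)
    (hH : ∀ ξ : Fin n → ℝ, ∑ i, ∑ j, ξ i * ξ j * H i j ≤ 0) :
    ∑ i, ∑ j, A i j * H i j ≤ 0 := by
  set B : Matrix (Fin n) (Fin n) ℝ := (1/2 : ℝ) • (A + A.transpose) with hB
  have hBsymm : ∀ i j, B i j = B j i := by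
    intro i j
    simp only [hB, Matrix.smul_apply, Matrix.add_apply, Matrix.transpose_apply, smul_eq_mul]
    ring
  have hBpsd : B.PosSemidef := by
    refine Matrix.PosSemidef.of_dotProduct_mulVec_nonneg ?_ ?_
    · ext i j
      simp only [Matrix.conjTranspose_apply, star_trivial]
      exact hBsymm j i
    · intro ξ
      have h0 : dotProduct (star ξ) (B.mulVec ξ) = ∑ i, ∑ j, B i j * ξ i * ξ j := by
        simp only [dotProduct, Matrix.mulVec, star_trivial, Finset.mul_sum]
        exact Finset.sum_congr rfl fun i _ => Finset.sum_congr rfl fun j _ => by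
          ring
      have h1 : ∑ i, ∑ j, A.transpose i j * ξ i * ξ j = ∑ i, ∑ j, A i j * ξ i * ξ j := by
        rw [Finset.sum_comm]
        exact Finset.sum_congr rfl fun i _ => Finset.sum_congr rfl fun j _ => by
          rw [Matrix.transpose_apply]; ring
      have h2 : ∑ i, ∑ j, B i j * ξ i * ξ j
          = (1/2) * (∑ i, ∑ j, A i j * ξ i * ξ j) + (1/2) * (∑ i, ∑ j, A.transpose i j * ξ i * ξ j) := by
        simp only [hB, Matrix.smul_apply, Matrix.add_apply, smul_eq_mul, Finset.mul_sum]
        rw [← Finset.sum_add_distrib]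
        refine Finset.sum_congr rfl fun i _ => ?_
        rw [← Finset.sum_add_distrib]
        exact Finset.sum_congr rfl fun j _ => by ring
      rw [h0, h2, h1]
      have := hA ξ
      linarith
  have hgoal : ∑ i, ∑ j, A i j * H i j = ∑ i, ∑ j, B i j * H i j := by
    have h1 : ∑ i, ∑ j, A.transpose i j * H i j = ∑ i, ∑ j, A i j * H i j := by
      rw [Finset.sum_comm]
      exact Finset.sum_congr rfl fun i _ => Finset.sum_congr rfl fun j _ => by
        rw [Matrix.transpose_apply, hHsymm i j]
    have h2 : ∑ i, ∑ j, B i j * H i j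
        = (1/2) * (∑ i, ∑ j, A i j * H i j) + (1/2) * (∑ i, ∑ j, A.transpose i j * H i j) := by
      simp only [hB, Matrix.smul_apply, Matrix.add_apply, smul_eq_mul, Finset.mul_sum]
      rw [← Finset.sum_add_distrib]
      refine Finset.sum_congr rfl fun i _ => ?_
      rw [← Finset.sum_add_distrib]
      exact Finset.sum_congr rfl fun j _ => by ring
    rw [h2, h1]; ring
  rw [hgoal]
  set S : Matrix (Fin n) (Fin n) ℝ := CFC.sqrt B with hS
  have hSpsd : S.PosSemidef := Matrix.nonneg_iff_posSemidef.mp (CFC.sqrt_nonneg B)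
  have hsq : S * S = B := by
    exact CFC.sqrt_mul_sqrt_self B hBpsd.nonneg
  have hSsymm : ∀ i j, S i j = S j i := by
    intro i j
    have := hSpsd.isHermitian.apply j i
    simpa using this
  have expand : ∀ i j, B i j * H i j = ∑ k, S k i * S k j * H i j := by
    intro i j
    rw [← hsq, Matrix.mul_apply, Finset.sum_mul]
    exact Finset.sum_congr rfl fun k _ => by rw [hSsymm i k]
  calc ∑ i, ∑ j, B i j * H i j
      = ∑ i, ∑ j, ∑ k, S k i * S k j * H i j :=
        Finset.sum_congr rfl fun i _ => Finset.sum_congr rfl fun j _ => expand i j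
    _ = ∑ i, ∑ k, ∑ j, S k i * S k j * H i j :=
        Finset.sum_congr rfl fun i _ => Finset.sum_comm
    _ = ∑ k, ∑ i, ∑ j, S k i * S k j * H i j := Finset.sum_comm
    _ ≤ 0 := Finset.sum_nonpos fun k _ => hH (fun i => S k i)

end AuxLemmas

/-- Comparison principle for uniformly parabolic operators. -/
theorem stmt_10 (G : Set (Fin n → ℝ)) (hGopen : IsOpen G)
    (hGbdd : Bornology.IsBounded G) (T : ℝ) (hT : 0 < T)
    (a : Fin n → Fin n → (Fin n → ℝ) → ℝ)
    (ha : ∀ i j, ContinuousOn (a i j) (closure G))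
    (K : ℝ) (hK : 0 < K)
    (hpar : ∀ z ∈ closure G, ∀ ξ : Fin n → ℝ,
      K * (∑ i, ξ i ^ 2) ≤ ∑ i : Fin n, ∑ j : Fin n, a i j z * ξ i * ξ j)
    (f : (Fin n → ℝ) → ℝ → (Fin n → ℝ) → ℝ)
    (hf : Continuous fun p : (Fin n → ℝ) × ℝ × (Fin n → ℝ) => f p.1 p.2.1 p.2.2)
    (hlip : ∀ W : Set ℝ, Bornology.IsBounded W → ∃ k > (0:ℝ),
      ∀ w₁ ∈ W, ∀ w₂ ∈ W, w₂ < w₁ → ∀ z ∈ G, ∀ ξ : Fin n → ℝ,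
        f z w₁ ξ - f z w₂ ξ < k * (w₁ - w₂))
    (x y : ℝ → (Fin n → ℝ) → ℝ)
    -- x, y ∈ C⁰(cl D) ∩ C^{1,2}(D), with D = (0,T) × G
    (hxc : ContinuousOn (fun p : ℝ × (Fin n → ℝ) => x p.1 p.2) (Icc 0 T ×ˢ closure G))
    (hyc : ContinuousOn (fun p : ℝ × (Fin n → ℝ) => y p.1 p.2) (Icc 0 T ×ˢ closure G))
    (hxt : ∀ t ∈ Ioo 0 T, ∀ z ∈ G, DifferentiableAt ℝ (fun s => x s z) t)
    (hyt : ∀ t ∈ Ioo 0 T, ∀ z ∈ G, DifferentiableAt ℝ (fun s => y s z) t)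
    (hxz : ∀ t ∈ Ioo 0 T, ∀ z ∈ G, ContDiffAt ℝ 2 (x t) z)
    (hyz : ∀ t ∈ Ioo 0 T, ∀ z ∈ G, ContDiffAt ℝ 2 (y t) z)
    (hLy : ∀ t ∈ Ioo 0 T, ∀ z ∈ G, 0 ≤ Lop a f y t z)
    (hLx : ∀ t ∈ Ioo 0 T, ∀ z ∈ G, Lop a f x t z ≤ 0)
    (hinit : ∀ z ∈ G, x 0 z ≤ y 0 z)
    (hbdry : ∀ t ∈ Icc 0 T, ∀ z ∈ frontier G, x t z ≤ y t z) :
    ∀ t ∈ Icc 0 T, ∀ z ∈ closure G, x t z ≤ y t z := by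
  -- compactness and the Lipschitz constant
  have hGcc : IsCompact (closure G) := hGbdd.isCompact_closure
  set D : Set (ℝ × (Fin n → ℝ)) := Icc 0 T ×ˢ closure G with hD
  have hDc : IsCompact D := isCompact_Icc.prod hGcc
  have hWx : IsCompact ((fun p : ℝ × (Fin n → ℝ) => x p.1 p.2) '' D) :=
    hDc.image_of_continuousOn hxc
  have hWy : IsCompact ((fun p : ℝ × (Fin n → ℝ) => y p.1 p.2) '' D) :=
    hDc.image_of_continuousOn hyc
  obtain ⟨k, hk0, hkf⟩ := hlip _ (hWx.union hWy).isBounded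
  -- the key estimate up to time T' < T
  have key : ∀ T', T' ∈ Ioo 0 T → ∀ t ∈ Icc 0 T', ∀ z ∈ closure G, x t z ≤ y t z := by
    intro T' hT' 
    by_contra hcon
    push_neg at hcon
    obtain ⟨t₁, ht₁, z₁, hz₁, hlt₁⟩ := hcon
    set D' : Set (ℝ × (Fin n → ℝ)) := Icc 0 T' ×ˢ closure G with hD'
    have hsub : D' ⊆ D := prod_mono (Icc_subset_Icc le_rfl hT'.2.le) subset_rfl
    have hD'c : IsCompact D' := isCompact_Icc.prod hGcc
    set w : ℝ × (Fin n → ℝ) → ℝ :=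
      fun p => (x p.1 p.2 - y p.1 p.2) * Real.exp (-(k * p.1)) with hw
    have hwc : ContinuousOn w D' := by
      refine (((hxc.mono hsub).sub (hyc.mono hsub)).mul ?_)
      exact (Real.continuous_exp.comp (continuous_const.mul continuous_fst).neg).continuousOn
    have hp₁mem : (t₁, z₁) ∈ D' := ⟨ht₁, hz₁⟩
    obtain ⟨p₀, hp₀D, hmax⟩ := hD'c.exists_isMaxOn ⟨(t₁, z₁), hp₁mem⟩ hwc
    obtain ⟨t₀, z₀⟩ := p₀
    have ht₀ : t₀ ∈ Icc 0 T' := hp₀D.1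
    have hz₀ : z₀ ∈ closure G := hp₀D.2
    have hM : 0 < w (t₀, z₀) := by
      have h1 : w (t₁, z₁) ≤ w (t₀, z₀) := hmax hp₁mem
      have h2 : 0 < w (t₁, z₁) := by
        apply mul_pos (by linarith) (Real.exp_pos _)
      linarith
    -- z₀ is interior
    have hz₀G : z₀ ∈ G := by
      by_contra hzf
      have hfr : z₀ ∈ frontier G := by
        rw [hGopen.frontier_eq]
        exact ⟨hz₀, hzf⟩
      have := hbdry t₀ ⟨ht₀.1, ht₀.2.trans hT'.2.le⟩ z₀ hfr
      have : w (t₀, z₀) ≤ 0 :=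
        mul_nonpos_of_nonpos_of_nonneg (by linarith) (Real.exp_pos _).le
      linarith
    -- t₀ is positive
    have ht₀pos : 0 < t₀ := by
      rcases lt_or_eq_of_le ht₀.1 with h | h
      · exact h
      · exfalso
        have := hinit z₀ hz₀G
        have : w (t₀, z₀) ≤ 0 := by
          rw [← h]
          exact mul_nonpos_of_nonpos_of_nonneg (by linarith) (Real.exp_pos _).le
        linarith
    have ht₀T : t₀ ∈ Ioo 0 T := ⟨ht₀pos, lt_of_le_of_lt ht₀.2 hT'.2⟩
    -- abbreviations
    set X : ℝ := x t₀ z₀ with hX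
    set Y : ℝ := y t₀ z₀ with hY
    have hE : (0:ℝ) < Real.exp (-(k * t₀)) := Real.exp_pos _
    have hu₀ : 0 < X - Y := by
      by_contra hc
      push_neg at hc
      have : w (t₀, z₀) ≤ 0 :=
        mul_nonpos_of_nonpos_of_nonneg (by simpa [hw] using sub_nonpos.mpr hc) hE.le
      linarith
    -- time derivative inequality
    set x' : ℝ := deriv (fun s => x s z₀) t₀ with hx'
    set y' : ℝ := deriv (fun s => y s z₀) t₀ with hy'
    have hxd : HasDerivAt (fun s => x s z₀) x' t₀ := (hxt t₀ ht₀T z₀ hz₀G).hasDerivAt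
    have hyd : HasDerivAt (fun s => y s z₀) y' t₀ := (hyt t₀ ht₀T z₀ hz₀G).hasDerivAt
    have hexp : HasDerivAt (fun s : ℝ => Real.exp (-(k * s)))
        (Real.exp (-(k * t₀)) * -k) t₀ := by
      have h1 : HasDerivAt (fun s : ℝ => -(k * s)) (-k) t₀ := by
        have := ((hasDerivAt_id' t₀).const_mul k).neg; rwa [mul_one] at this
      exact h1.exp
    have hgd : HasDerivAt (fun s => (x s z₀ - y s z₀) * Real.exp (-(k * s)))
        ((x' - y') * Real.exp (-(k * t₀)) + (X - Y) * (Real.exp (-(k * t₀)) * -k)) t₀ :=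
      (hxd.sub hyd).mul hexp
    have htime : k * (X - Y) ≤ x' - y' := by
      have h0 : 0 ≤ (x' - y') * Real.exp (-(k * t₀)) + (X - Y) * (Real.exp (-(k * t₀)) * -k) := by
        refine aux_deriv_nonneg ht₀pos ?_ hgd
        intro s hs
        have hsD : (s, z₀) ∈ D' := ⟨⟨hs.1, hs.2.trans ht₀.2⟩, hz₀⟩
        exact hmax hsD
      have h1 : 0 * Real.exp (-(k * t₀)) ≤ ((x' - y') - k * (X - Y)) * Real.exp (-(k * t₀)) := by
        rw [zero_mul]
        calc (0:ℝ) ≤ (x' - y') * Real.exp (-(k * t₀)) + (X - Y) * (Real.exp (-(k * t₀)) * -k) := h0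
        _ = ((x' - y') - k * (X - Y)) * Real.exp (-(k * t₀)) := by ring
      have := le_of_mul_le_mul_right h1 hE
      linarith
    -- spatial local max
    have hφc2 : ContDiffAt ℝ 2 (fun ζ => x t₀ ζ - y t₀ ζ) z₀ :=
      (hxz t₀ ht₀T z₀ hz₀G).sub (hyz t₀ ht₀T z₀ hz₀G)
    have hφmax : IsLocalMax (fun ζ => x t₀ ζ - y t₀ ζ) z₀ := by
      filter_upwards [hGopen.mem_nhds hz₀G] with ζ hζ
      have hζD : (t₀, ζ) ∈ D' := ⟨ht₀, subset_closure hζ⟩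
      have := hmax hζD
      simp only [hw] at this
      exact le_of_mul_le_mul_right this hE
    -- gradients agree
    have hxdz : DifferentiableAt ℝ (x t₀) z₀ :=
      (hxz t₀ ht₀T z₀ hz₀G).differentiableAt two_ne_zero
    have hydz : DifferentiableAt ℝ (y t₀) z₀ :=
      (hyz t₀ ht₀T z₀ hz₀G).differentiableAt two_ne_zero
    have hgradeq : grad (x t₀) z₀ = grad (y t₀) z₀ := by
      have h0 : fderiv ℝ (fun ζ => x t₀ ζ - y t₀ ζ) z₀ = 0 := hφmax.fderiv_eq_zero
      rw [fderiv_fun_sub hxdz hydz, sub_eq_zero] at h0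
      ext i
      simp only [grad]
      rw [h0]
    -- second-order term
    have hA : ∀ ξ : Fin n → ℝ, 0 ≤ ∑ i, ∑ j, a i j z₀ * ξ i * ξ j := by
      intro ξ
      refine le_trans ?_ (hpar z₀ hz₀ ξ)
      positivity
    have hHsymm : ∀ i j, pd2 (fun ζ => x t₀ ζ - y t₀ ζ) z₀ i j
        = pd2 (fun ζ => x t₀ ζ - y t₀ ζ) z₀ j i := pd2_symm hφc2
    have hHneg : ∀ ξ : Fin n → ℝ,
        ∑ i, ∑ j, ξ i * ξ j * pd2 (fun ζ => x t₀ ζ - y t₀ ζ) z₀ i j ≤ 0 := by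
      intro ξ
      have heq : ∑ i, ∑ j, ξ i * ξ j * pd2 (fun ζ => x t₀ ζ - y t₀ ζ) z₀ i j
          = fderiv ℝ (fderiv ℝ (fun ζ => x t₀ ζ - y t₀ ζ)) z₀ ξ ξ := by
        rw [aux_bilin_expand]
        exact Finset.sum_congr rfl fun i _ => Finset.sum_congr rfl fun j _ => by
          rw [pd2_eq hφc2]
      rw [heq]
      exact aux_snd_nonpos hφc2 hφmax ξ
    have htr : ∑ i, ∑ j, a i j z₀ * pd2 (fun ζ => x t₀ ζ - y t₀ ζ) z₀ i j ≤ 0 :=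
      aux_trace_nonpos (A := fun i j => a i j z₀)
        (H := fun i j => pd2 (fun ζ => x t₀ ζ - y t₀ ζ) z₀ i j) hA hHsymm hHneg
    have hsplit : ∑ i, ∑ j, a i j z₀ * pd2 (fun ζ => x t₀ ζ - y t₀ ζ) z₀ i j
        = (∑ i, ∑ j, a i j z₀ * pd2 (x t₀) z₀ i j)
          - (∑ i, ∑ j, a i j z₀ * pd2 (y t₀) z₀ i j) := by
      rw [← Finset.sum_sub_distrib]
      refine Finset.sum_congr rfl fun i _ => ?_
      rw [← Finset.sum_sub_distrib]
      refine Finset.sum_congr rfl fun j _ => ?_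
      rw [pd2_sub (hxz t₀ ht₀T z₀ hz₀G) (hyz t₀ ht₀T z₀ hz₀G)]
      ring
    -- the operator inequalities
    have hLx' := hLx t₀ ht₀T z₀ hz₀G
    have hLy' := hLy t₀ ht₀T z₀ hz₀G
    rw [Lop] at hLx' hLy'
    -- f inequality
    have hXW : X ∈ ((fun p : ℝ × (Fin n → ℝ) => x p.1 p.2) '' D)
        ∪ ((fun p : ℝ × (Fin n → ℝ) => y p.1 p.2) '' D) :=
      Or.inl ⟨(t₀, z₀), hsub ⟨ht₀, hz₀⟩, rfl⟩
    have hYW : Y ∈ ((fun p : ℝ × (Fin n → ℝ) => x p.1 p.2) '' D)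
        ∪ ((fun p : ℝ × (Fin n → ℝ) => y p.1 p.2) '' D) :=
      Or.inr ⟨(t₀, z₀), hsub ⟨ht₀, hz₀⟩, rfl⟩
    have hfineq : f z₀ X (grad (x t₀) z₀) - f z₀ Y (grad (x t₀) z₀) < k * (X - Y) :=
      hkf X hXW Y hYW (by linarith) z₀ hz₀G (grad (x t₀) z₀)
    rw [hgradeq] at hLx' hfineq
    -- chain everything
    have hchain : x' - y' ≤
        (∑ i, ∑ j, a i j z₀ * pd2 (fun ζ => x t₀ ζ - y t₀ ζ) z₀ i j)
          + (f z₀ X (grad (y t₀) z₀) - f z₀ Y (grad (y t₀) z₀)) := by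
      rw [hsplit]
      simp only [← hX, ← hY, ← hx', ← hy'] at hLx' hLy'
      linarith
    linarith
  -- from key: everything with t < T
  have hmain : ∀ t ∈ Ico 0 T, ∀ z ∈ closure G, x t z ≤ y t z := by
    intro t ht z hz
    by_cases hzG : z ∈ G
    · have hT' : (t + T) / 2 ∈ Ioo 0 T := by constructor <;> [linarith [ht.1]; linarith [ht.2]]
      exact key _ hT' t ⟨ht.1, by linarith [ht.2]⟩ z hz
    · have hfr : z ∈ frontier G := by
        rw [hGopen.frontier_eq]
        exact ⟨hz, hzG⟩
      exact hbdry t ⟨ht.1, ht.2.le⟩ z hfr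
  -- extend to t = T by continuity
  intro t ht z hz
  rcases lt_or_eq_of_le ht.2 with h | h
  · exact hmain t ⟨ht.1, h⟩ z hz
  · subst h
    have hmapsto : MapsTo (fun s : ℝ => (s, z)) (Icc 0 t) D := fun s hs => ⟨hs, hz⟩
    have hxcont : ContinuousOn (fun s => x s z) (Icc 0 t) :=
      hxc.comp ((continuous_id.prodMk continuous_const).continuousOn) hmapsto
    have hycont : ContinuousOn (fun s => y s z) (Icc 0 t) :=
      hyc.comp ((continuous_id.prodMk continuous_const).continuousOn) hmapsto
    have hne : (𝓝[Ico 0 t] t).NeBot := by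
      apply mem_closure_iff_nhdsWithin_neBot.mp
      rw [closure_Ico (by linarith : (0:ℝ) ≠ t)]
      exact ⟨ht.1, le_rfl⟩
    have hxl : Tendsto (fun s => x s z) (𝓝[Ico 0 t] t) (𝓝 (x t z)) :=
      ((hxcont t ⟨ht.1, le_rfl⟩).mono Ico_subset_Icc_self).tendsto
    have hyl : Tendsto (fun s => y s z) (𝓝[Ico 0 t] t) (𝓝 (y t z)) :=
      ((hycont t ⟨ht.1, le_rfl⟩).mono Ico_subset_Icc_self).tendsto
    refine le_of_tendsto_of_tendsto hxl hyl ?_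
    filter_upwards [self_mem_nhdsWithin] with s hs
    exact hmain s hs z hz
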